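/- Let x ∈ W_n and let 1 ≤ i ≤ n−2. Then x ∈ D_i(W_n) if and only if t x ∈ D_i(W_n); and if this is the case, then γ_i(t x) = t γ_i(x). -/

import Mathlib

/-!
Common setup: the Weyl group `W n` of type `B_n`, realized as the group of
permutations `w` of `I_n = {±1, …, ±n}` (inside `Equiv.Perm ℤ`, fixing every
integer of absolute value `> n`) such that `w (-i) = - w i` for all `i`.
-/

namespace TypeB

/-- The generator `t = (1, -1)`. -/
def t : Equiv.Perm ℤ := Equiv.swap 1 (-1)

/-- The generator `s i = (i, i+1)(-i, -(i+1))` (meaningful for `1 ≤ i`). -/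
def s (i : ℕ) : Equiv.Perm ℤ :=
  Equiv.swap (i : ℤ) ((i : ℤ) + 1) * Equiv.swap (-(i : ℤ)) (-((i : ℤ) + 1))

/-- The generating set `S_n = {t, s_1, …, s_{n-1}}`. -/
def gens (n : ℕ) : Set (Equiv.Perm ℤ) :=
  {t} ∪ {x | ∃ i : ℕ, 1 ≤ i ∧ i < n ∧ x = s i}

/-- The Weyl group `W_n` of type `B_n`, as a subgroup of `Equiv.Perm ℤ`:
permutations `w` with `w (-i) = - (w i)` for all `i` and fixing all `i` with `|i| > n`. -/
def W (n : ℕ) : Subgroup (Equiv.Perm ℤ) where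
  carrier := {w | (∀ i : ℤ, w (-i) = - w i) ∧ ∀ i : ℤ, (n : ℤ) < |i| → w i = i}
  one_mem' := ⟨fun _ => rfl, fun _ _ => rfl⟩
  mul_mem' := by
    rintro u v ⟨hu1, hu2⟩ ⟨hv1, hv2⟩
    refine ⟨fun i => ?_, fun i hi => ?_⟩
    · simp only [Equiv.Perm.mul_apply, hv1, hu1]
    · simp only [Equiv.Perm.mul_apply, hv2 i hi, hu2 i hi]
  inv_mem' := by
    rintro u ⟨hu1, hu2⟩
    refine ⟨fun i => ?_, fun i hi => ?_⟩
    · apply u.injective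
      rw [Equiv.Perm.inv_def, Equiv.apply_symm_apply, hu1, Equiv.apply_symm_apply]
    · apply u.injective
      rw [Equiv.Perm.inv_def, Equiv.apply_symm_apply, hu2 i hi]

/-- The length of `w` with respect to the generating set `S_n`. -/
noncomputable def len (n : ℕ) (w : Equiv.Perm ℤ) : ℕ :=
  sInf {k | ∃ l : List (Equiv.Perm ℤ), (∀ x ∈ l, x ∈ gens n) ∧ l.prod = w ∧ l.length = k}

/-- `l` is a reduced expression for `w` with respect to `S_n`. -/
def IsReduced (n : ℕ) (w : Equiv.Perm ℤ) (l : List (Equiv.Perm ℤ)) : Prop :=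
  (∀ x ∈ l, x ∈ gens n) ∧ l.prod = w ∧ l.length = len n w

/-- `ℓ_t w`: the number of occurrences of `t` in a reduced expression of `w`
(independent of the chosen reduced expression). -/
noncomputable def lent (n : ℕ) (w : Equiv.Perm ℤ) : ℕ :=
  letI : DecidableEq (Equiv.Perm ℤ) := Classical.decEq _
  sInf {m | ∃ l, IsReduced n w l ∧ l.count t = m}

/-- `r 1 = t` and `r (i+1) = s i * r i`. -/
def r : ℕ → Equiv.Perm ℤ
  | 0 => 1
  | 1 => t
  | (i + 2) => s (i + 1) * r (i + 1)

/-- `t_1 = t` and `t_{i+1} = s_i * t_i * s_i`. -/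
def tperm : ℕ → Equiv.Perm ℤ
  | 0 => 1
  | 1 => t
  | (i + 2) => s (i + 1) * tperm (i + 1) * s (i + 1)

/-- `a l = r 1 * r 2 * ⋯ * r l`, with `a 0 = 1`. -/
def a : ℕ → Equiv.Perm ℤ
  | 0 => 1
  | (l + 1) => a l * r (l + 1)

/-- The symmetric group `𝔖_n`: the subgroup generated by `s_1, …, s_{n-1}`. -/
def Sym (n : ℕ) : Subgroup (Equiv.Perm ℤ) :=
  Subgroup.closure {x | ∃ i : ℕ, 1 ≤ i ∧ i < n ∧ x = s i}

/-- The parabolic subgroup `𝔖_{l,n-l}`: generated by `{s_1, …, s_{n-1}} \ {s_l}`. -/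
def SymP (n l : ℕ) : Subgroup (Equiv.Perm ℤ) :=
  Subgroup.closure {x | ∃ i : ℕ, 1 ≤ i ∧ i < n ∧ i ≠ l ∧ x = s i}

/-- `Y_{l,n-l}`: elements of `𝔖_n` of minimal length in their coset `w 𝔖_{l,n-l}`. -/
def Y (n l : ℕ) : Set (Equiv.Perm ℤ) :=
  {w | w ∈ Sym n ∧ ∀ u ∈ SymP n l, len n w ≤ len n (w * u)}

/-- The subgroup `𝔖_{[i,j]}` generated by `s_i, …, s_{j-1}`. -/
def SymI (i j : ℕ) : Subgroup (Equiv.Perm ℤ) :=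
  Subgroup.closure {x | ∃ k : ℕ, i ≤ k ∧ k < j ∧ x = s k}

/-- The function reversing the interval `[i,j]` (and `[-j,-i]`), for `1 ≤ i`. -/
def revFun (i j : ℤ) : ℤ → ℤ := fun k =>
  if 1 ≤ i ∧ i ≤ k ∧ k ≤ j then i + j - k
  else if 1 ≤ i ∧ -j ≤ k ∧ k ≤ -i then -(i + j) - k
  else k

lemma revFun_involutive (i j : ℤ) : Function.Involutive (revFun i j) := by
  intro k
  unfold revFun
  split_ifs <;> omega

/-- `σ_{[i,j]}`: the longest element of `𝔖_{[i,j]}`, i.e. the order-reversing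
permutation of the interval `[i,j]` (extended to `I_n` by `w(-k) = -w(k)`). -/
def sigmaI (i j : ℕ) : Equiv.Perm ℤ := (revFun_involutive (i : ℤ) (j : ℤ)).toPerm

/-- `σ_{l,n-l}`: the longest element of `𝔖_{l,n-l} = 𝔖_{[1,l]} × 𝔖_{[l+1,n]}`. -/
def sigmaLL (n l : ℕ) : Equiv.Perm ℤ := sigmaI 1 l * sigmaI (l + 1) n

/-- The function negating all `k` with `|k| ≤ n`. -/
def negnFun (n : ℤ) : ℤ → ℤ := fun k => if -n ≤ k ∧ k ≤ n then -k else k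

lemma negnFun_involutive (n : ℤ) : Function.Involutive (negnFun n) := by
  intro k
  unfold negnFun
  split_ifs <;> omega

/-- `w_n`: the longest element of `W_n`; as a permutation, `w_n i = -i` for `|i| ≤ n`. -/
def wlong (n : ℕ) : Equiv.Perm ℤ := (negnFun_involutive (n : ℤ)).toPerm

/-- `c_I = s_{i_1} s_{i_2} ⋯ s_{i_k}` for `I = {i_1 < i_2 < ⋯ < i_k}`. -/
def cElt (I : Finset ℕ) : Equiv.Perm ℤ := ((I.sort (· ≤ ·)).map s).prod

/-- `d_I = s_{i_k} ⋯ s_{i_2} s_{i_1}` for `I = {i_1 < i_2 < ⋯ < i_k}`. -/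
def dElt (I : Finset ℕ) : Equiv.Perm ℤ := (((I.sort (· ≤ ·)).map s).reverse).prod

/-- `X_n^{(m)}`: elements of `W_n` of minimal length in their coset `w W_m`. -/
def X (n m : ℕ) : Set (Equiv.Perm ℤ) :=
  {w | w ∈ W n ∧ ∀ u ∈ W m, len n w ≤ len n (w * u)}

/-- Bruhat order: `x ≤ y` iff some reduced expression of `y` contains a subword
which is a reduced expression of `x`. -/
def BruhatLE (n : ℕ) (x y : Equiv.Perm ℤ) : Prop :=
  ∃ ly, IsReduced n y ly ∧ ∃ lx, lx.Sublist ly ∧ IsReduced n x lx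

/-- Strict Bruhat order. -/
def BruhatLT (n : ℕ) (x y : Equiv.Perm ℤ) : Prop := BruhatLE n x y ∧ x ≠ y

/-- `D_i(W_n)`: the set of `x` such that exactly one of `s_i, s_{i+1}` is a
(right) descent of `x`. -/
def Dset (n i : ℕ) : Set (Equiv.Perm ℤ) :=
  {x | Xor' (len n (x * s i) < len n x) (len n (x * s (i + 1)) < len n x)}

open Classical in
/-- `γ_i x`: the unique element of `{x s_i, x s_{i+1}} ∩ D_i(W_n)` (for `x ∈ D_i(W_n)`). -/
noncomputable def gamma (n i : ℕ) (x : Equiv.Perm ℤ) : Equiv.Perm ℤ :=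
  if x * s i ∈ Dset n i then x * s i else x * s (i + 1)

/-- `E_m^{(r)}`: the set of `w ∈ W_m` such that `|w 1| > |w i|` for `2 ≤ i ≤ r+2`
and `(w 2, …, w (r+2))` is a shuffle of a positive decreasing sequence and a
negative increasing sequence. -/
def E (m ρ : ℕ) : Set (Equiv.Perm ℤ) :=
  {w | w ∈ W m ∧ (∀ i : ℕ, 2 ≤ i → i ≤ ρ + 2 → |w (i : ℤ)| < |w (1 : ℤ)|) ∧
    ∀ i j : ℕ, 2 ≤ i → i < j → j ≤ ρ + 2 →
      (0 < w (i : ℤ) → 0 < w (j : ℤ) → w (j : ℤ) < w (i : ℤ)) ∧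
      (w (i : ℤ) < 0 → w (j : ℤ) < 0 → w (i : ℤ) < w (j : ℤ))}

/-- The product `r_{i_1} ⋯ r_{i_l}` for a sequence `i : Fin l → ℕ`. -/
def prodR {l : ℕ} (i : Fin l → ℕ) : Equiv.Perm ℤ := (List.ofFn fun k => r (i k)).prod

/-- `(l, α, β, σ)` is a decomposition of `w` as in the decomposition lemma:
`l ≤ n`, `α, β ∈ Y_{l,n-l}`, `σ ∈ 𝔖_{l,n-l}` and `w = α a_l σ β⁻¹`. -/
def IsDecomp (n : ℕ) (w : Equiv.Perm ℤ) (l : ℕ) (α β σ : Equiv.Perm ℤ) : Prop :=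
  l ≤ n ∧ α ∈ Y n l ∧ β ∈ Y n l ∧ σ ∈ SymP n l ∧ w = α * a l * σ * β⁻¹


section Aux
open Finset

lemma mem_W_iff {n : ℕ} {w : Equiv.Perm ℤ} :
    w ∈ W n ↔ (∀ i : ℤ, w (-i) = - w i) ∧ ∀ i : ℤ, (n : ℤ) < |i| → w i = i := Iff.rfl

lemma t_apply (k : ℤ) : t k = if k = 1 then -1 else if k = -1 then 1 else k := by
  simp [t, Equiv.swap_apply_def]

lemma s_apply (j : ℕ) (hj : 1 ≤ j) (k : ℤ) :
    s j k = if k = (j:ℤ) then (j:ℤ)+1 else if k = (j:ℤ)+1 then (j:ℤ)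
      else if k = -(j:ℤ) then -((j:ℤ)+1) else if k = -((j:ℤ)+1) then -(j:ℤ) else k := by
  have hj' : (1:ℤ) ≤ (j:ℤ) := by exact_mod_cast hj
  simp only [s, Equiv.Perm.mul_apply, Equiv.swap_apply_def]
  split_ifs <;> omega

lemma t_mem {n : ℕ} (hn : 1 ≤ n) : t ∈ W n := by
  rw [mem_W_iff]
  have hn' : (1:ℤ) ≤ (n:ℤ) := by exact_mod_cast hn
  constructor
  · intro i; rw [t_apply, t_apply]; split_ifs <;> omega
  · intro i hi
    have := lt_abs.mp hi
    rw [t_apply]; split_ifs <;> omega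

lemma s_mem {n j : ℕ} (hj : 1 ≤ j) (hjn : j + 1 ≤ n) : s j ∈ W n := by
  rw [mem_W_iff]
  have h1 : (1:ℤ) ≤ (j:ℤ) := by exact_mod_cast hj
  have h2 : (j:ℤ) + 1 ≤ (n:ℤ) := by exact_mod_cast hjn
  constructor
  · intro i; rw [s_apply j hj, s_apply j hj]; split_ifs <;> omega
  · intro i hi
    have := lt_abs.mp hi
    rw [s_apply j hj]; split_ifs <;> omega

lemma t_mul_t : t * t = 1 := by
  simp [t]

lemma s_mul_s (j : ℕ) (hj : 1 ≤ j) : s j * s j = 1 := by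
  have h1 : (1:ℤ) ≤ (j:ℤ) := by exact_mod_cast hj
  apply Equiv.ext
  intro k
  simp only [Equiv.Perm.mul_apply, Equiv.Perm.one_apply, s_apply j hj]
  split_ifs <;> omega

lemma s_s_apply (j : ℕ) (hj : 1 ≤ j) (k : ℤ) : s j (s j k) = k := by
  have h : s j (s j k) = (s j * s j) k := rfl
  rw [h, s_mul_s j hj, Equiv.Perm.one_apply]


lemma W_odd {n : ℕ} {w : Equiv.Perm ℤ} (hw : w ∈ W n) (i : ℤ) : w (-i) = - w i :=
  (mem_W_iff.mp hw).1 i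

lemma W_fix {n : ℕ} {w : Equiv.Perm ℤ} (hw : w ∈ W n) {i : ℤ} (hi : (n:ℤ) < |i|) : w i = i :=
  (mem_W_iff.mp hw).2 i hi

lemma W_zero {n : ℕ} {w : Equiv.Perm ℤ} (hw : w ∈ W n) : w 0 = 0 := by
  have h := W_odd hw 0
  rw [neg_zero] at h
  omega

lemma W_ne_zero {n : ℕ} {w : Equiv.Perm ℤ} (hw : w ∈ W n) {k : ℤ} (hk : k ≠ 0) : w k ≠ 0 :=
  fun h => hk (w.injective (h.trans (W_zero hw).symm))

lemma W_abs_le {n : ℕ} {w : Equiv.Perm ℤ} (hw : w ∈ W n) {k : ℤ} (hk : |k| ≤ (n:ℤ)) :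
    |w k| ≤ (n:ℤ) := by
  by_contra h
  push_neg at h
  have h2 : w⁻¹ ∈ W n := inv_mem hw
  have h3 : k = w k := (Equiv.symm_apply_apply w k).symm.trans (W_fix h2 h)
  rw [← h3] at h
  exact absurd h (not_lt.mpr hk)

/-- inversion count -/
noncomputable def invc (n : ℕ) (w : Equiv.Perm ℤ) : ℕ :=
  ((Icc (1:ℤ) (n:ℤ) ×ˢ Icc (1:ℤ) (n:ℤ)).filter fun p => p.1 < p.2 ∧ w p.2 < w p.1).card

/-- negative sum -/
noncomputable def negs (n : ℕ) (w : Equiv.Perm ℤ) : ℕ := ∑ k ∈ Icc (1:ℤ) (n:ℤ), (-(w k)).toNat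

noncomputable def LL (n : ℕ) (w : Equiv.Perm ℤ) : ℕ := invc n w + negs n w

lemma invc_one (n : ℕ) : invc n 1 = 0 := by
  rw [invc, Finset.card_eq_zero, Finset.filter_eq_empty_iff]
  intro p _
  simp only [Equiv.Perm.one_apply]
  omega

lemma negs_one (n : ℕ) : negs n 1 = 0 := by
  rw [negs]
  apply Finset.sum_eq_zero
  intro k hk
  rw [Finset.mem_Icc] at hk
  simp only [Equiv.Perm.one_apply]
  omega

lemma LL_one (n : ℕ) : LL n 1 = 0 := by rw [LL, invc_one, negs_one]

lemma s_mem_Icc {n j : ℕ} (hj : 1 ≤ j) (hjn : j + 1 ≤ n) (k : ℤ) :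
    k ∈ Icc (1:ℤ) (n:ℤ) ↔ s j k ∈ Icc (1:ℤ) (n:ℤ) := by
  have h1 : (1:ℤ) ≤ (j:ℤ) := by exact_mod_cast hj
  have h2 : (j:ℤ) + 1 ≤ (n:ℤ) := by exact_mod_cast hjn
  simp only [Finset.mem_Icc]
  rw [s_apply j hj]
  split_ifs <;> omega

lemma negs_mul_s {n j : ℕ} (w : Equiv.Perm ℤ) (hj : 1 ≤ j) (hjn : j + 1 ≤ n) :
    negs n (w * s j) = negs n w := by
  unfold negs
  simp only [Equiv.Perm.mul_apply]
  exact Finset.sum_equiv (s j) (fun k => s_mem_Icc hj hjn k) (fun k _ => rfl)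

lemma s_lt (j : ℕ) (hj : 1 ≤ j) {a b : ℤ} (ha : 1 ≤ a) (hb : 1 ≤ b) (hab : a < b)
    (hne : ¬(a = (j:ℤ) ∧ b = (j:ℤ)+1)) : s j a < s j b := by
  have h1 : (1:ℤ) ≤ (j:ℤ) := by exact_mod_cast hj
  rw [s_apply j hj, s_apply j hj]
  split_ifs <;> omega

lemma s_apply_j (j : ℕ) (hj : 1 ≤ j) : s j (j:ℤ) = (j:ℤ)+1 := by
  have h1 : (1:ℤ) ≤ (j:ℤ) := by exact_mod_cast hj
  rw [s_apply j hj]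
  split_ifs <;> omega

lemma s_apply_j1 (j : ℕ) (hj : 1 ≤ j) : s j ((j:ℤ)+1) = (j:ℤ) := by
  have h1 : (1:ℤ) ≤ (j:ℤ) := by exact_mod_cast hj
  rw [s_apply j hj]
  split_ifs <;> omega

lemma invc_mul_s {n j : ℕ} (w : Equiv.Perm ℤ) (hj : 1 ≤ j) (hjn : j + 1 ≤ n)
    (hlt : w (j:ℤ) < w ((j:ℤ)+1)) : invc n (w * s j) = invc n w + 1 := by
  classical
  have h1 : (1:ℤ) ≤ (j:ℤ) := by exact_mod_cast hj
  have h2 : (j:ℤ) + 1 ≤ (n:ℤ) := by exact_mod_cast hjn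
  have key : ((Icc (1:ℤ) (n:ℤ) ×ˢ Icc (1:ℤ) (n:ℤ)).filter
        fun p => p.1 < p.2 ∧ (w * s j) p.2 < (w * s j) p.1)
      = insert ((j:ℤ), (j:ℤ)+1)
          (((Icc (1:ℤ) (n:ℤ) ×ˢ Icc (1:ℤ) (n:ℤ)).filter
            fun p => p.1 < p.2 ∧ w p.2 < w p.1).image fun p => (s j p.1, s j p.2)) := by
    ext p
    simp only [Finset.mem_insert, Finset.mem_image, Finset.mem_filter]
    simp only [Finset.mem_product, Finset.mem_Icc, Equiv.Perm.mul_apply]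
    constructor
    · rintro ⟨⟨⟨ha1, ha2⟩, hb1, hb2⟩, hab, hv⟩
      by_cases hsp : p.1 = (j:ℤ) ∧ p.2 = (j:ℤ)+1
      · left
        exact Prod.ext hsp.1 hsp.2
      · right
        have hm1 := Finset.mem_Icc.mp ((s_mem_Icc hj hjn p.1).mp (Finset.mem_Icc.mpr ⟨ha1, ha2⟩))
        have hm2 := Finset.mem_Icc.mp ((s_mem_Icc hj hjn p.2).mp (Finset.mem_Icc.mpr ⟨hb1, hb2⟩))
        exact ⟨(s j p.1, s j p.2), ⟨⟨⟨hm1.1, hm1.2⟩, hm2.1, hm2.2⟩,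
          s_lt j hj ha1 hb1 hab hsp, hv⟩,
          Prod.ext (s_s_apply j hj p.1) (s_s_apply j hj p.2)⟩
    · rintro (rfl | ⟨q, ⟨⟨⟨hq11, hq12⟩, hq21, hq22⟩, hqlt, hqv⟩, rfl⟩)
      · refine ⟨⟨⟨by omega, by omega⟩, by omega, by omega⟩, by omega, ?_⟩
        simp only
        rw [s_apply_j1 j hj, s_apply_j j hj]
        exact hlt
      · have hne : ¬(q.1 = (j:ℤ) ∧ q.2 = (j:ℤ)+1) := by
          rintro ⟨e1, e2⟩
          rw [e1, e2] at hqv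
          omega
        have hm1 := Finset.mem_Icc.mp ((s_mem_Icc hj hjn q.1).mp (Finset.mem_Icc.mpr ⟨hq11, hq12⟩))
        have hm2 := Finset.mem_Icc.mp ((s_mem_Icc hj hjn q.2).mp (Finset.mem_Icc.mpr ⟨hq21, hq22⟩))
        refine ⟨⟨⟨hm1.1, hm1.2⟩, hm2.1, hm2.2⟩, s_lt j hj hq11 hq21 hqlt hne, ?_⟩
        simp only
        rw [s_s_apply j hj, s_s_apply j hj]
        exact hqv
  have hinj : Function.Injective (fun p : ℤ × ℤ => (s j p.1, s j p.2)) := by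
    intro a b h
    simp only [Prod.mk.injEq] at h
    exact Prod.ext ((s j).injective h.1) ((s j).injective h.2)
  have hnotmem : ((j:ℤ), (j:ℤ)+1) ∉ (((Icc (1:ℤ) (n:ℤ) ×ˢ Icc (1:ℤ) (n:ℤ)).filter
      fun p => p.1 < p.2 ∧ w p.2 < w p.1).image fun p => (s j p.1, s j p.2)) := by
    rw [Finset.mem_image]
    rintro ⟨q, hq, he⟩
    simp only [Prod.mk.injEq] at he
    have e1 : q.1 = (j:ℤ)+1 := by
      have := congrArg (s j) he.1
      rwa [s_s_apply j hj, s_apply_j j hj] at this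
    have e2 : q.2 = (j:ℤ) := by
      have := congrArg (s j) he.2
      rwa [s_s_apply j hj, s_apply_j1 j hj] at this
    rw [Finset.mem_filter] at hq
    omega
  rw [invc, key, Finset.card_insert_of_notMem hnotmem,
    Finset.card_image_of_injective _ hinj, invc]

lemma invc_mul_s' {n j : ℕ} (w : Equiv.Perm ℤ) (hj : 1 ≤ j) (hjn : j + 1 ≤ n)
    (hgt : w ((j:ℤ)+1) < w (j:ℤ)) : invc n w = invc n (w * s j) + 1 := by
  have h := invc_mul_s (w * s j) hj hjn (by
    simp only [Equiv.Perm.mul_apply]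
    rw [s_apply_j j hj, s_apply_j1 j hj]
    exact hgt)
  rwa [mul_assoc, s_mul_s j hj, mul_one] at h

lemma LL_mul_s_lt {n j : ℕ} (w : Equiv.Perm ℤ) (hj : 1 ≤ j) (hjn : j + 1 ≤ n)
    (hlt : w (j:ℤ) < w ((j:ℤ)+1)) : LL n (w * s j) = LL n w + 1 := by
  unfold LL
  rw [invc_mul_s w hj hjn hlt, negs_mul_s w hj hjn]
  omega

lemma LL_mul_s_gt {n j : ℕ} (w : Equiv.Perm ℤ) (hj : 1 ≤ j) (hjn : j + 1 ≤ n)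
    (hgt : w ((j:ℤ)+1) < w (j:ℤ)) : LL n w = LL n (w * s j) + 1 := by
  unfold LL
  rw [invc_mul_s' w hj hjn hgt, negs_mul_s w hj hjn]
  omega


lemma t_fix {k : ℤ} (h : 1 < k) : t k = k := by
  rw [t_apply]; split_ifs <;> omega

lemma invc_split (n : ℕ) (u : Equiv.Perm ℤ) (hn : 1 ≤ n) :
    invc n u = ((Icc (1:ℤ) (n:ℤ)).filter fun b => 1 < b ∧ u b < u 1).card
      + ((Icc (1:ℤ) (n:ℤ) ×ˢ Icc (1:ℤ) (n:ℤ)).filter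
          fun p => 1 < p.1 ∧ p.1 < p.2 ∧ u p.2 < u p.1).card := by
  classical
  have hn' : (1:ℤ) ≤ (n:ℤ) := by exact_mod_cast hn
  have hsplit := Finset.card_filter_add_card_filter_not
    (s := (Icc (1:ℤ) (n:ℤ) ×ˢ Icc (1:ℤ) (n:ℤ)).filter fun p => p.1 < p.2 ∧ u p.2 < u p.1)
    (p := fun p : ℤ × ℤ => p.1 = 1)
  rw [invc, ← hsplit]
  congr 1
  · -- row part
    apply Finset.card_nbij' (i := Prod.snd) (j := fun b => ((1:ℤ), b))
    · intro p hp
      simp only [Finset.mem_coe, Finset.mem_filter, Finset.mem_product, Finset.mem_Icc] at hp ⊢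
      obtain ⟨⟨⟨_, _⟩, hb1, hb2⟩, hab, hv⟩ := hp.1
      refine ⟨⟨hb1, hb2⟩, by omega, ?_⟩
      rw [← hp.2]
      exact hv
    · intro b hb
      simp only [Finset.mem_coe, Finset.mem_filter, Finset.mem_product, Finset.mem_Icc] at hb ⊢
      obtain ⟨⟨hb1, hb2⟩, hgt, hv⟩ := hb
      exact ⟨⟨⟨⟨le_refl _, hn'⟩, hb1, hb2⟩, hgt, hv⟩, trivial⟩
    · intro p hp
      simp only [Finset.mem_coe, Finset.mem_filter] at hp
      exact (Prod.ext hp.2.symm rfl)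
    · intro b _
      rfl
  · -- rest part
    rw [Finset.filter_filter]
    congr 1
    apply Finset.filter_congr
    intro p hp
    simp only [Finset.mem_product, Finset.mem_Icc] at hp
    constructor
    · rintro ⟨⟨h1, h2⟩, h3⟩
      exact ⟨by omega, h1, h2⟩
    · rintro ⟨h1, h2, h3⟩
      exact ⟨⟨h2, h3⟩, by omega⟩

lemma rest_t (n : ℕ) (w : Equiv.Perm ℤ) :
    ((Icc (1:ℤ) (n:ℤ) ×ˢ Icc (1:ℤ) (n:ℤ)).filter
        fun p => 1 < p.1 ∧ p.1 < p.2 ∧ (w * t) p.2 < (w * t) p.1)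
      = ((Icc (1:ℤ) (n:ℤ) ×ˢ Icc (1:ℤ) (n:ℤ)).filter
          fun p => 1 < p.1 ∧ p.1 < p.2 ∧ w p.2 < w p.1) := by
  apply Finset.filter_congr
  intro p _
  constructor <;> rintro ⟨h1, h2, h3⟩ <;> refine ⟨h1, h2, ?_⟩
  · rwa [Equiv.Perm.mul_apply, Equiv.Perm.mul_apply, t_fix (by omega), t_fix (by omega)] at h3
  · rw [Equiv.Perm.mul_apply, Equiv.Perm.mul_apply, t_fix (by omega), t_fix (by omega)]
    exact h3

lemma wt_one {n : ℕ} {w : Equiv.Perm ℤ} (hw : w ∈ W n) : (w * t) 1 = -(w 1) := by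
  rw [Equiv.Perm.mul_apply, show t 1 = -1 by rw [t_apply]; norm_num, W_odd hw 1]

lemma row_t {n : ℕ} {w : Equiv.Perm ℤ} (hw : w ∈ W n) :
    ((Icc (1:ℤ) (n:ℤ)).filter fun b => 1 < b ∧ (w * t) b < (w * t) 1)
      = (Icc (1:ℤ) (n:ℤ)).filter fun b => 1 < b ∧ w b < -(w 1) := by
  apply Finset.filter_congr
  intro b _
  constructor <;> rintro ⟨h1, h2⟩ <;> refine ⟨h1, ?_⟩
  · rwa [wt_one hw, Equiv.Perm.mul_apply, t_fix h1] at h2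
  · rw [wt_one hw, Equiv.Perm.mul_apply, t_fix h1]
    exact h2

lemma card_mid {n : ℕ} {w : Equiv.Perm ℤ} (hw : w ∈ W n) (hn : 1 ≤ n) (hm : 0 < w 1) :
    ((Icc (1:ℤ) (n:ℤ)).filter fun b => 1 < b ∧ -(w 1) ≤ w b ∧ w b < w 1).card
      = (w 1 - 1).toNat := by
  classical
  have hn' : (1:ℤ) ≤ (n:ℤ) := by exact_mod_cast hn
  have hwn : |w 1| ≤ (n:ℤ) := W_abs_le hw (by rw [abs_one]; exact hn')
  have hw1n : w 1 ≤ (n:ℤ) := by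
    rcases abs_cases (w 1) with ⟨h, h2⟩ | ⟨h, h2⟩ <;> omega
  have hcard : (Icc (1:ℤ) (w 1 - 1)).card = (w 1 - 1).toNat := by
    rw [Int.card_Icc]
    omega
  rw [← hcard]
  apply Finset.card_nbij (i := fun b => |w b|)
  · intro b hb
    simp only [Finset.mem_coe, Finset.mem_filter, Finset.mem_Icc] at hb ⊢
    obtain ⟨⟨hb1, hb2⟩, hgt, hge, hlt⟩ := hb
    have hne0 : w b ≠ 0 := W_ne_zero hw (by omega)
    have hnem : w b ≠ -(w 1) := by
      intro h
      have h2 : w b = w (-1) := by rw [h, W_odd hw 1]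
      have := w.injective h2
      omega
    rcases abs_cases (w b) with ⟨h, h2⟩ | ⟨h, h2⟩ <;> exact ⟨by omega, by omega⟩
  · intro a ha b hb h
    simp only [Finset.coe_filter, Set.mem_setOf_eq, Finset.mem_Icc] at ha hb
    rcases abs_eq_abs.mp h with h' | h'
    · exact w.injective h'
    · exfalso
      have h2 : w a = w (-b) := by rw [h', W_odd hw b]
      have := w.injective h2
      omega
  · intro v hv
    rw [Finset.coe_Icc, Set.mem_Icc] at hv
    obtain ⟨hv1, hv2⟩ := hv
    set c := w⁻¹ v with hc
    have hcv : w c = v := Equiv.apply_symm_apply w v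
    have hc0 : c ≠ 0 := by
      intro h
      rw [h, W_zero hw] at hcv
      omega
    have hvabs : |v| ≤ (n:ℤ) := by
      rcases abs_cases v with ⟨h, h2⟩ | ⟨h, h2⟩ <;> omega
    have hcabs : |c| ≤ (n:ℤ) := by
      have := W_abs_le (inv_mem hw) (k := v) hvabs
      rwa [← hc] at this
    have hwc : w |c| = v ∨ w |c| = -v := by
      rcases abs_choice c with h | h
      · left; rw [h, hcv]
      · right; rw [h, W_odd hw c, hcv]
    have hlpos : 1 ≤ |c| := by
      rcases abs_cases c with ⟨h, h2⟩ | ⟨h, h2⟩ <;> omega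
    have hne1 : |c| ≠ 1 := by
      intro h
      rw [h] at hwc
      rcases hwc with h' | h' <;> omega
    have hb2 : -(w 1) ≤ w |c| ∧ w |c| < w 1 := by
      rcases hwc with h' | h' <;> exact ⟨by omega, by omega⟩
    have heq : abs (w (abs c)) = v := by
      have hnn := abs_nonneg (w (abs c))
      rcases hwc with h' | h' <;>
        rcases abs_cases (w (abs c)) with ⟨h'', hs⟩ | ⟨h'', hs⟩ <;> omega
    refine ⟨|c|, ?_, heq⟩
    rw [Finset.mem_coe, Finset.mem_filter, Finset.mem_Icc]
    exact ⟨⟨hlpos, hcabs⟩, by omega, hb2.1, hb2.2⟩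

lemma row_count {n : ℕ} {w : Equiv.Perm ℤ} (hw : w ∈ W n) (hn : 1 ≤ n) (hm : 0 < w 1) :
    ((Icc (1:ℤ) (n:ℤ)).filter fun b => 1 < b ∧ w b < w 1).card + 1
      = ((Icc (1:ℤ) (n:ℤ)).filter fun b => 1 < b ∧ w b < -(w 1)).card + (w 1).toNat := by
  classical
  have hsplit := Finset.card_filter_add_card_filter_not
    (s := (Icc (1:ℤ) (n:ℤ)).filter fun b => 1 < b ∧ w b < w 1)
    (p := fun b : ℤ => w b < -(w 1))
  have e1 : (((Icc (1:ℤ) (n:ℤ)).filter fun b => 1 < b ∧ w b < w 1).filter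
      fun b : ℤ => w b < -(w 1)) = (Icc (1:ℤ) (n:ℤ)).filter fun b => 1 < b ∧ w b < -(w 1) := by
    rw [Finset.filter_filter]
    apply Finset.filter_congr
    intro b _
    constructor
    · rintro ⟨⟨h1, _⟩, h3⟩; exact ⟨h1, h3⟩
    · rintro ⟨h1, h3⟩; exact ⟨⟨h1, by omega⟩, h3⟩
  have e2 : (((Icc (1:ℤ) (n:ℤ)).filter fun b => 1 < b ∧ w b < w 1).filter
      fun b : ℤ => ¬(w b < -(w 1))) = (Icc (1:ℤ) (n:ℤ)).filter
        fun b => 1 < b ∧ -(w 1) ≤ w b ∧ w b < w 1 := by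
    rw [Finset.filter_filter]
    apply Finset.filter_congr
    intro b _
    constructor
    · rintro ⟨⟨h1, h2⟩, h3⟩; exact ⟨h1, by omega, h2⟩
    · rintro ⟨h1, h2, h3⟩; exact ⟨⟨h1, h3⟩, by omega⟩
  rw [e1, e2, card_mid hw hn hm] at hsplit
  omega

lemma negs_mul_t {n : ℕ} {w : Equiv.Perm ℤ} (hw : w ∈ W n) (hn : 1 ≤ n) (hm : 0 < w 1) :
    negs n (w * t) = negs n w + (w 1).toNat := by
  unfold negs
  have h1 : (1:ℤ) ∈ Icc (1:ℤ) (n:ℤ) := by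
    rw [Finset.mem_Icc]
    exact ⟨le_refl _, by exact_mod_cast hn⟩
  rw [← Finset.add_sum_erase _ _ h1, ← Finset.add_sum_erase _ (fun k => (-(w k)).toNat) h1]
  have hsum : ∑ k ∈ (Icc (1:ℤ) (n:ℤ)).erase 1, (-((w * t) k)).toNat
      = ∑ k ∈ (Icc (1:ℤ) (n:ℤ)).erase 1, (-(w k)).toNat := by
    apply Finset.sum_congr rfl
    intro k hk
    rw [Finset.mem_erase, Finset.mem_Icc] at hk
    rw [Equiv.Perm.mul_apply, t_fix (by omega)]
  rw [hsum, wt_one hw]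
  omega

lemma invc_mul_t {n : ℕ} {w : Equiv.Perm ℤ} (hw : w ∈ W n) (hn : 1 ≤ n) (hm : 0 < w 1) :
    invc n w + 1 = invc n (w * t) + (w 1).toNat := by
  rw [invc_split n w hn, invc_split n (w * t) hn, rest_t, row_t hw]
  have := row_count hw hn hm
  omega

lemma LL_mul_t_pos {n : ℕ} {w : Equiv.Perm ℤ} (hw : w ∈ W n) (hn : 1 ≤ n) (hm : 0 < w 1) :
    LL n (w * t) = LL n w + 1 := by
  unfold LL
  have h1 := invc_mul_t hw hn hm
  have h2 := negs_mul_t hw hn hm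
  omega

lemma LL_mul_t_neg {n : ℕ} {w : Equiv.Perm ℤ} (hw : w ∈ W n) (hn : 1 ≤ n) (hm : w 1 < 0) :
    LL n w = LL n (w * t) + 1 := by
  have hu : w * t ∈ W n := mul_mem hw (t_mem hn)
  have hu1 : 0 < (w * t) 1 := by
    rw [wt_one hw]
    omega
  have := LL_mul_t_pos hu hn hu1
  rwa [mul_assoc, t_mul_t, mul_one] at this


lemma gens_subset {n : ℕ} (hn : 1 ≤ n) {g : Equiv.Perm ℤ} (hg : g ∈ gens n) : g ∈ W n := by
  rcases hg with hg | ⟨i, hi1, hi2, rfl⟩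
  · rw [Set.mem_singleton_iff] at hg
    subst hg
    exact t_mem hn
  · exact s_mem hi1 (by omega)

lemma list_prod_mem_W {n : ℕ} (hn : 1 ≤ n) (l : List (Equiv.Perm ℤ))
    (hl : ∀ x ∈ l, x ∈ gens n) : l.prod ∈ W n := by
  induction l with
  | nil => exact one_mem _
  | cons a l ih =>
    rw [List.prod_cons]
    exact mul_mem (gens_subset hn (hl a (by simp))) (ih fun x hx => hl x (by simp [hx]))

lemma LL_le_length {n : ℕ} (hn : 1 ≤ n) (l : List (Equiv.Perm ℤ))
    (hl : ∀ x ∈ l, x ∈ gens n) : LL n l.prod ≤ l.length := by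
  induction l using List.reverseRecOn with
  | nil => simp [LL_one]
  | append_singleton l g ih =>
    have hl' : ∀ x ∈ l, x ∈ gens n := fun x hx => hl x (by simp [hx])
    have hw : l.prod ∈ W n := list_prod_mem_W hn l hl'
    have ihl := ih hl'
    rw [List.prod_append, List.prod_singleton, List.length_append, List.length_singleton]
    have hg := hl g (by simp)
    rcases hg with hg | ⟨i, hi1, hi2, rfl⟩
    · rw [Set.mem_singleton_iff] at hg
      subst hg
      have h0 : l.prod 1 ≠ 0 := W_ne_zero hw one_ne_zero
      rcases lt_trichotomy (l.prod 1) 0 with h | h | h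
      · have := LL_mul_t_neg hw hn h
        omega
      · omega
      · have := LL_mul_t_pos hw hn h
        omega
    · have hne : l.prod (i:ℤ) ≠ l.prod ((i:ℤ)+1) := by
        intro h
        have := l.prod.injective h
        omega
      rcases lt_trichotomy (l.prod (i:ℤ)) (l.prod ((i:ℤ)+1)) with h | h | h
      · have := LL_mul_s_lt (n := n) l.prod hi1 (by omega) h
        omega
      · omega
      · have := LL_mul_s_gt (n := n) l.prod hi1 (by omega) h
        omega

lemma no_descent_eq_one {n : ℕ} {w : Equiv.Perm ℤ} (hw : w ∈ W n) (hn : 1 ≤ n)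
    (h1 : ¬ w 1 < 0)
    (hd : ¬ ∃ j : ℕ, 1 ≤ j ∧ j + 1 ≤ n ∧ w ((j:ℤ)+1) < w (j:ℤ)) : w = 1 := by
  push_neg at hd
  have hw1 : (0:ℤ) < w 1 := by
    have := W_ne_zero hw (k := 1) one_ne_zero
    omega
  have hchain : ∀ j : ℕ, 1 ≤ j → j + 1 ≤ n → w (j:ℤ) < w ((j:ℤ)+1) := by
    intro j hj1 hj2
    have hne : w (j:ℤ) ≠ w ((j:ℤ)+1) := by
      intro h
      have := w.injective h
      omega
    have := hd j hj1 hj2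
    omega
  have hup : ∀ j : ℕ, 1 ≤ j → j ≤ n → (j:ℤ) ≤ w (j:ℤ) := by
    intro j
    induction j with
    | zero => intro h; omega
    | succ k ih =>
      intro _ h2
      rcases Nat.eq_zero_or_pos k with rfl | hk
      · simp only [zero_add, Nat.cast_one]; omega
      · have ha := ih (by omega) (by omega)
        have hb := hchain k (by omega) (by omega)
        push_cast
        push_cast at ha hb
        omega
  have haux : ∀ d : ℕ, ∀ j : ℕ, 1 ≤ j → j + d = n → w (j:ℤ) ≤ (j:ℤ) := by
    intro d
    induction d with
    | zero =>
      intro j h1 h2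
      have hj : j = n := by omega
      subst hj
      have habs : |w (j:ℤ)| ≤ (j:ℤ) := W_abs_le hw (by
        rw [abs_of_pos (by exact_mod_cast h1)])
      rcases abs_cases (w (j:ℤ)) with ⟨h, h2⟩ | ⟨h, h2⟩ <;> omega
    | succ k ih =>
      intro j h1 h2
      have ha := ih (j+1) (by omega) (by omega)
      have hb := hchain j h1 (by omega)
      push_cast at ha hb ⊢
      omega
  have hid : ∀ j : ℕ, 1 ≤ j → j ≤ n → w (j:ℤ) = (j:ℤ) := by
    intro j hj1 hj2
    have := hup j hj1 hj2
    have := haux (n - j) j hj1 (by omega)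
    omega
  apply Equiv.ext
  intro k
  simp only [Equiv.Perm.one_apply]
  rcases lt_trichotomy k 0 with hk | rfl | hk
  · have hodd := W_odd hw (-k)
    rw [neg_neg] at hodd
    by_cases hkn : (n:ℤ) < -k
    · exact W_fix hw (by rw [abs_of_neg hk]; exact hkn)
    · have h1' : w (-k) = -k := by
        have := hid (-k).toNat (by omega) (by omega)
        rwa [Int.toNat_of_nonneg (by omega)] at this
      rw [hodd, h1', neg_neg]
  · exact W_zero hw
  · by_cases hkn : (n:ℤ) < k
    · exact W_fix hw (by rwa [abs_of_pos hk])
    · have := hid k.toNat (by omega) (by omega)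
      rwa [Int.toNat_of_nonneg (by omega)] at this

lemma exists_word {n : ℕ} (hn : 1 ≤ n) :
    ∀ N (w : Equiv.Perm ℤ), LL n w ≤ N → w ∈ W n →
      ∃ l : List (Equiv.Perm ℤ), (∀ x ∈ l, x ∈ gens n) ∧ l.prod = w ∧ l.length = LL n w := by
  intro N
  induction N with
  | zero =>
    intro w hN hw
    by_cases hd : ∃ j : ℕ, 1 ≤ j ∧ j + 1 ≤ n ∧ w ((j:ℤ)+1) < w (j:ℤ)
    · obtain ⟨j, hj1, hj2, hlt⟩ := hd
      have := LL_mul_s_gt w hj1 hj2 hlt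
      omega
    · by_cases hneg : w 1 < 0
      · have := LL_mul_t_neg hw hn hneg
        omega
      · have h1 := no_descent_eq_one hw hn hneg hd
        subst h1
        exact ⟨[], by simp, by simp, by simp [LL_one]⟩
  | succ N ih =>
    intro w hN hw
    by_cases hd : ∃ j : ℕ, 1 ≤ j ∧ j + 1 ≤ n ∧ w ((j:ℤ)+1) < w (j:ℤ)
    · obtain ⟨j, hj1, hj2, hlt⟩ := hd
      have hkey := LL_mul_s_gt w hj1 hj2 hlt
      obtain ⟨l, hl, hp, hlen⟩ := ih (w * s j) (by omega) (mul_mem hw (s_mem hj1 hj2))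
      refine ⟨l ++ [s j], ?_, ?_, ?_⟩
      · intro x hx
        rcases List.mem_append.mp hx with h | h
        · exact hl x h
        · rw [List.mem_singleton] at h
          subst h
          exact Set.mem_union_right _ ⟨j, hj1, by omega, rfl⟩
      · rw [List.prod_append, List.prod_singleton, hp, mul_assoc, s_mul_s j hj1, mul_one]
      · rw [List.length_append, List.length_singleton, hlen]
        omega
    · by_cases hneg : w 1 < 0
      · have hkey := LL_mul_t_neg hw hn hneg
        obtain ⟨l, hl, hp, hlen⟩ := ih (w * t) (by omega) (mul_mem hw (t_mem hn))
        refine ⟨l ++ [t], ?_, ?_, ?_⟩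
        · intro x hx
          rcases List.mem_append.mp hx with h | h
          · exact hl x h
          · rw [List.mem_singleton] at h
            subst h
            exact Set.mem_union_left _ rfl
        · rw [List.prod_append, List.prod_singleton, hp, mul_assoc, t_mul_t, mul_one]
        · rw [List.length_append, List.length_singleton, hlen]
          omega
      · have h1 := no_descent_eq_one hw hn hneg hd
        subst h1
        exact ⟨[], by simp, by simp, by simp [LL_one]⟩

lemma len_eq_LL {n : ℕ} {w : Equiv.Perm ℤ} (hn : 1 ≤ n) (hw : w ∈ W n) :
    len n w = LL n w := by
  obtain ⟨l, hl, hp, hlen⟩ := exists_word hn (LL n w) w (le_refl _) hw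
  apply le_antisymm
  · exact Nat.sInf_le ⟨l, hl, hp, hlen⟩
  · have hne : {k | ∃ l : List (Equiv.Perm ℤ),
        (∀ x ∈ l, x ∈ gens n) ∧ l.prod = w ∧ l.length = k}.Nonempty :=
      ⟨LL n w, l, hl, hp, hlen⟩
    obtain ⟨l', hl', hp', hlen'⟩ := Nat.sInf_mem hne
    calc LL n w = LL n l'.prod := by rw [hp']
      _ ≤ l'.length := LL_le_length hn l' hl'
      _ = len n w := hlen'

lemma descent_iff {n j : ℕ} {w : Equiv.Perm ℤ} (hw : w ∈ W n) (hj1 : 1 ≤ j)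
    (hj2 : j + 1 ≤ n) : len n (w * s j) < len n w ↔ w ((j:ℤ)+1) < w (j:ℤ) := by
  have hn : 1 ≤ n := by omega
  have hws : w * s j ∈ W n := mul_mem hw (s_mem hj1 hj2)
  rw [len_eq_LL hn hw, len_eq_LL hn hws]
  have hne : w (j:ℤ) ≠ w ((j:ℤ)+1) := by
    intro h
    have := w.injective h
    omega
  rcases lt_trichotomy (w (j:ℤ)) (w ((j:ℤ)+1)) with h | h | h
  · have := LL_mul_s_lt w hj1 hj2 h
    constructor
    · intro h'; omega
    · intro h'; omega
  · exact absurd h hne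
  · have := LL_mul_s_gt w hj1 hj2 h
    constructor
    · intro _; exact h
    · intro _; omega


lemma t_val_lt_iff {n : ℕ} {w : Equiv.Perm ℤ} (hw : w ∈ W n) {j : ℤ} (hj : 1 ≤ j) :
    (t * w) (j+1) < (t * w) j ↔ w (j+1) < w j := by
  have hne : w j ≠ w (j+1) := by
    intro h
    have := w.injective h
    omega
  have hne2 : w (j+1) ≠ -(w j) := by
    intro h
    have h2 : w (j+1) = w (-j) := by rw [h, W_odd hw j]
    have := w.injective h2
    omega
  have hz1 : w j ≠ 0 := W_ne_zero hw (by omega)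
  have hz2 : w (j+1) ≠ 0 := W_ne_zero hw (by omega)
  simp only [Equiv.Perm.mul_apply, t_apply]
  split_ifs <;> omega

lemma len_t_descent_iff {n j : ℕ} {w : Equiv.Perm ℤ} (hw : w ∈ W n) (hj1 : 1 ≤ j)
    (hj2 : j + 1 ≤ n) : len n (t * w * s j) < len n (t * w) ↔ len n (w * s j) < len n w := by
  have hn : 1 ≤ n := by omega
  have htw : t * w ∈ W n := mul_mem (t_mem hn) hw
  rw [descent_iff htw hj1 hj2, descent_iff hw hj1 hj2]
  exact t_val_lt_iff hw (by exact_mod_cast hj1)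

lemma Dset_t_iff {n i : ℕ} {w : Equiv.Perm ℤ} (hw : w ∈ W n) (hi1 : 1 ≤ i)
    (hi2 : i + 2 ≤ n) : w ∈ Dset n i ↔ t * w ∈ Dset n i := by
  have h1 := len_t_descent_iff hw hi1 (by omega)
  have h2 := len_t_descent_iff hw (j := i + 1) (by omega) (by omega)
  simp only [Dset, Set.mem_setOf_eq]
  rw [h1, h2]

end Aux

/-- for `x ∈ W_n` and `1 ≤ i ≤ n-2`, `x ∈ D_i(W_n)` iff
`t x ∈ D_i(W_n)`, in which case `γ_i (t x) = t γ_i x`. -/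
theorem stmt11 (n : ℕ) (x : Equiv.Perm ℤ) (hx : x ∈ W n)
    (i : ℕ) (hi1 : 1 ≤ i) (hi2 : i + 2 ≤ n) :
    (x ∈ Dset n i ↔ t * x ∈ Dset n i) ∧
    (x ∈ Dset n i → gamma n i (t * x) = t * gamma n i x) := by
  refine ⟨Dset_t_iff hx hi1 hi2, fun _ => ?_⟩
  have hsi : x * s i ∈ W n := mul_mem hx (s_mem hi1 (by omega))
  have hiff := Dset_t_iff hsi hi1 hi2
  unfold gamma
  rw [mul_assoc t x (s i), mul_assoc t x (s (i+1))]
  by_cases hc : x * s i ∈ Dset n i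
  · rw [if_pos (hiff.mp hc), if_pos hc]
  · rw [if_neg (fun h => hc (hiff.mpr h)), if_neg hc]

end TypeB
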